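/- For every integer m ≥ 2, every r ∈ ℤ/nℤ, and every s ∈ ℤ/nℤ, the variable x_m^{(s)} does not divide the polynomial σ_{(n−1)(m−1)}^{(r)}(x_1,…,x_m). -/

import Mathlib

noncomputable section

open Finset MvPolynomial

open Classical in
/-- `τ_k^{(s)}(x_a, …, x_b)` (1-indexed window `a ≤ i ≤ b`): the sum over weakly increasing
sequences `a ≤ i_1 ≤ ⋯ ≤ i_k ≤ b` in which no value occurs more than `n - 1` times of
`x_{i_1}^{(s)} x_{i_2}^{(s-1)} ⋯ x_{i_k}^{(s-k+1)}`; zero for `k < 0`. -/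
def lT (n m a b : ℕ) (k : ℤ) (s : ZMod n) : MvPolynomial (Fin m × ZMod n) ℤ :=
  if 0 ≤ k then
    ∑ f ∈ Finset.univ.filter (fun f : Fin k.toNat → Fin m =>
        Monotone f ∧ (∀ j, a ≤ (f j : ℕ) + 1 ∧ (f j : ℕ) + 1 ≤ b) ∧
        ∀ v : Fin m, (Finset.univ.filter (fun j => f j = v)).card ≤ n - 1),
      ∏ j : Fin k.toNat, MvPolynomial.X (f j, s - ((j : ℕ) : ZMod n))
  else 0

/-- `σ_k^{(s)}(x_a, …, x_b) = ∑_{i=0}^k x_a^{(s)} x_a^{(s-1)} ⋯ x_a^{(s-i+1)} ·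
τ_{k-i}^{(s-i)}(x_{a+1}, …, x_b)`. -/
def lS (n m a b k : ℕ) (s : ZMod n) : MvPolynomial (Fin m × ZMod n) ℤ :=
  ∑ i ∈ Finset.range (k + 1),
    (∏ u ∈ Finset.range i,
      if h : a - 1 < m then MvPolynomial.X ((⟨a - 1, h⟩ : Fin m), s - (u : ZMod n)) else 0) *
    lT n m (a + 1) b ((k - i : ℕ) : ℤ) (s - (i : ZMod n))

private lemma evalT_nonneg (n m : ℕ) (v0 : Fin m × ZMod n) (a b : ℕ) (k : ℤ) (s' : ZMod n) :
    0 ≤ MvPolynomial.eval (fun x => if x = v0 then (0:ℤ) else 1) (lT n m a b k s') := by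
  unfold lT
  split
  · rw [map_sum]
    refine Finset.sum_nonneg fun f _ => ?_
    rw [map_prod]
    refine Finset.prod_nonneg fun j _ => ?_
    rw [MvPolynomial.eval_X]
    split <;> norm_num
  · simp

private lemma evalT_ge_one (n m : ℕ) (hn : 1 < n) (hm : 2 ≤ m) (s : ZMod n) (s' : ZMod n) :
    1 ≤ MvPolynomial.eval
      (fun x => if x = ((⟨m - 1, Nat.sub_one_lt_of_lt (show 0 < m by omega)⟩ : Fin m), s) then (0:ℤ) else 1)
      (lT n m 2 m (((n - 1) * (m - 2) : ℕ) : ℤ) s') := by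
  classical
  unfold lT
  rw [if_pos (by positivity)]
  simp only [Int.toNat_natCast]
  rw [map_sum]
  set N := (n - 1) * (m - 2) with hN
  have hdiv : ∀ j : Fin N, (j : ℕ) / (n - 1) < m - 2 := by
    intro j
    have hj : (j : ℕ) < (m - 2) * (n - 1) := by
      calc (j : ℕ) < N := j.isLt
        _ = (m - 2) * (n - 1) := by rw [hN, mul_comm]
    rw [Nat.div_lt_iff_lt_mul (by omega)]
    exact hj
  set f₀ : Fin N → Fin m := fun j => ⟨1 + (j : ℕ) / (n - 1), by have := hdiv j; omega⟩
    with hf0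
  have hval : MvPolynomial.eval
      (fun x => if x = ((⟨m - 1, by omega⟩ : Fin m), s) then (0:ℤ) else 1)
      (∏ j : Fin N, MvPolynomial.X (f₀ j, s' - ((j : ℕ) : ZMod n))) = 1 := by
    rw [map_prod]
    refine Finset.prod_eq_one fun j _ => ?_
    rw [MvPolynomial.eval_X, if_neg]
    intro h
    have h1 : f₀ j = (⟨m - 1, by omega⟩ : Fin m) := (Prod.mk.injEq _ _ _ _ ▸ h).1
    have h2 : 1 + (j : ℕ) / (n - 1) = m - 1 := congrArg Fin.val h1
    have h3 := hdiv j
    generalize hd : (j : ℕ) / (n - 1) = d at h2 h3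
    omega
  have hmem : f₀ ∈ Finset.univ.filter (fun f : Fin N → Fin m =>
      Monotone f ∧ (∀ j, 2 ≤ (f j : ℕ) + 1 ∧ (f j : ℕ) + 1 ≤ m) ∧
      ∀ v : Fin m, (Finset.univ.filter (fun j => f j = v)).card ≤ n - 1) := by
    simp only [Finset.mem_filter, Finset.mem_univ, true_and]
    refine ⟨?_, ?_, ?_⟩
    · intro j j' hjj'
      rw [Fin.le_def]
      show 1 + (j : ℕ) / (n - 1) ≤ 1 + (j' : ℕ) / (n - 1)
      exact Nat.add_le_add_left (Nat.div_le_div_right (Fin.le_def.mp hjj')) 1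
    · intro j
      have h1 := hdiv j
      have h2 : ((f₀ j : ℕ)) = 1 + (j : ℕ) / (n - 1) := rfl
      generalize hd : (j : ℕ) / (n - 1) = d at h1 h2
      omega
    · intro v
      have hcard : (Finset.univ.filter (fun j : Fin N => f₀ j = v)).card ≤
          (Finset.univ : Finset (Fin (n - 1))).card := by
        refine Finset.card_le_card_of_injOn
          (fun j => ⟨(j : ℕ) % (n - 1), Nat.mod_lt _ (by omega)⟩)
          (fun _ _ => Finset.mem_univ _) ?_
        intro j hj j' hj' hmod
        simp only [Finset.coe_filter, Finset.mem_univ, Set.mem_setOf_eq, true_and] at hj hj'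
        have h1 : f₀ j = f₀ j' := hj.trans hj'.symm
        have hd0 : 1 + (j : ℕ) / (n - 1) = 1 + (j' : ℕ) / (n - 1) := congrArg Fin.val h1
        have hd : (j : ℕ) / (n - 1) = (j' : ℕ) / (n - 1) := Nat.add_left_cancel hd0
        have hm' : (j : ℕ) % (n - 1) = (j' : ℕ) % (n - 1) := congrArg Fin.val hmod
        refine Fin.ext ?_
        rw [← Nat.div_add_mod (j : ℕ) (n - 1), ← Nat.div_add_mod (j' : ℕ) (n - 1), hd, hm']
      exact le_of_le_of_eq hcard (Finset.card_fin _)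
  calc (1 : ℤ) = _ := hval.symm
    _ ≤ _ := by
        refine Finset.single_le_sum
          (f := fun f : Fin N → Fin m => MvPolynomial.eval
            (fun x => if x = ((⟨m - 1, by omega⟩ : Fin m), s) then (0:ℤ) else 1)
            (∏ j : Fin N, MvPolynomial.X (f j, s' - ((j : ℕ) : ZMod n))))
          (fun f _ => ?_) hmem
        rw [map_prod]
        refine Finset.prod_nonneg fun j _ => ?_
        rw [MvPolynomial.eval_X]
        split <;> norm_num

/-- no variable `x_m^{(s)}` divides `σ_{(n−1)(m−1)}^{(r)}(x_1,…,x_m)`. -/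
theorem xm_not_dvd_sigma (n m : ℕ) (hn : 1 < n) (hm : 2 ≤ m) (r : ZMod n) (s : ZMod n) :
    ¬ MvPolynomial.X ((⟨m - 1, by omega⟩ : Fin m), s) ∣
        lS n m 1 m ((n - 1) * (m - 1)) r := by
  set v0 : Fin m × ZMod n := ((⟨m - 1, by omega⟩ : Fin m), s) with hv0
  set g : Fin m × ZMod n → ℤ := fun x => if x = v0 then (0:ℤ) else 1 with hg
  have hprefix : ∀ i : ℕ, MvPolynomial.eval g
      (∏ u ∈ Finset.range i,
        if h : 1 - 1 < m then
          MvPolynomial.X ((⟨1 - 1, h⟩ : Fin m), r - (u : ZMod n)) else 0) = 1 := by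
    intro i
    rw [map_prod]
    refine Finset.prod_eq_one fun u _ => ?_
    rw [dif_pos (by omega), MvPolynomial.eval_X]
    have hne : ((⟨1 - 1, by omega⟩ : Fin m), r - (u : ZMod n)) ≠ v0 := by
      rw [hv0]
      intro h
      have h1 : (⟨1 - 1, by omega⟩ : Fin m) = (⟨m - 1, by omega⟩ : Fin m) :=
        (Prod.mk.injEq _ _ _ _ ▸ h).1
      have := congrArg Fin.val h1
      simp at this
      omega
    simp only [hg]
    rw [if_neg hne]
  have hge : 1 ≤ MvPolynomial.eval g (lS n m 1 m ((n - 1) * (m - 1)) r) := by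
    rw [lS, map_sum]
    have hnonneg : ∀ i ∈ Finset.range ((n - 1) * (m - 1) + 1),
        (0:ℤ) ≤ MvPolynomial.eval g
          ((∏ u ∈ Finset.range i,
            if h : 1 - 1 < m then
              MvPolynomial.X ((⟨1 - 1, h⟩ : Fin m), r - (u : ZMod n)) else 0) *
          lT n m (1 + 1) m (((n - 1) * (m - 1) - i : ℕ) : ℤ) (r - (i : ZMod n))) := by
      intro i _
      rw [map_mul, hprefix i, one_mul]
      exact evalT_nonneg n m v0 _ _ _ _
    have hmem : n - 1 ∈ Finset.range ((n - 1) * (m - 1) + 1) := by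
      have hle : (n - 1) * 1 ≤ (n - 1) * (m - 1) := Nat.mul_le_mul_left _ (by omega)
      rw [Finset.mem_range]
      omega
    have hterm : (1:ℤ) ≤ MvPolynomial.eval g
        ((∏ u ∈ Finset.range (n - 1),
          if h : 1 - 1 < m then
            MvPolynomial.X ((⟨1 - 1, h⟩ : Fin m), r - (u : ZMod n)) else 0) *
        lT n m (1 + 1) m (((n - 1) * (m - 1) - (n - 1) : ℕ) : ℤ) (r - ((n - 1 : ℕ) : ZMod n))) := by
      rw [map_mul, hprefix, one_mul]
      have harith : (n - 1) * (m - 1) - (n - 1) = (n - 1) * (m - 2) := by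
        have h2 : m - 1 = (m - 2) + 1 := by omega
        rw [h2, Nat.mul_add, mul_one]
        omega
      rw [harith]
      exact evalT_ge_one n m hn hm s _
    calc (1:ℤ) ≤ _ := hterm
      _ ≤ _ := Finset.single_le_sum hnonneg hmem
  rintro ⟨q, hq⟩
  have h0 : MvPolynomial.eval g (lS n m 1 m ((n - 1) * (m - 1)) r) = 0 := by
    rw [hq, map_mul, MvPolynomial.eval_X]
    simp [hg]
  rw [h0] at hge
  norm_num at hge

end
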